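/- Let A and B be unital C*-algebras and φ : A → B a ℂ-homogeneous function (φ(λx) = λφ(x) for all x ∈ A, λ ∈ ℂ) such that the entrywise map φ ⊗ id_{M₂} : M₂(A) → M₂(B) maps unitaries of M₂(A) to unitaries of M₂(B) and satisfies (φ ⊗ id_{M₂})(uv) = (φ ⊗ id_{M₂})(u) · (φ ⊗ id_{M₂})(v) for all unitaries u, v ∈ M₂(A). Then φ(a + b) = φ(a) + φ(b) for all a, b ∈ A that are scalar multiples of unitaries of A. -/

import Mathlib

set_option maxHeartbeats 1000000 in
lemma aux_u2 {A : Type*} [CStarAlgebra A] (α β : ℂ)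
    (h : α * (starRingEnd ℂ) α + β * (starRingEnd ℂ) β = 1) :
    (!![α • 1, β • 1; -(((starRingEnd ℂ) β) • 1), ((starRingEnd ℂ) α) • 1] :
      Matrix (Fin 2) (Fin 2) A) ∈ unitary _ := by
  constructor <;>
  · ext i j
    fin_cases i <;> fin_cases j <;>
      simp [Matrix.mul_apply, Fin.sum_univ_two, Matrix.one_apply, star_smul,
        smul_smul, mul_comm, mul_left_comm]
    all_goals first
      | rw [← add_smul, h, one_smul]
      | rw [← add_smul, add_comm, h, one_smul]

lemma aux_diag {A : Type*} [CStarAlgebra A] (u v : A) (hu : u ∈ unitary A)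
    (hv : v ∈ unitary A) :
    (!![u, 0; 0, v] : Matrix (Fin 2) (Fin 2) A) ∈ unitary _ := by
  obtain ⟨hu1, hu2⟩ := hu
  obtain ⟨hv1, hv2⟩ := hv
  constructor <;>
  · ext i j
    fin_cases i <;> fin_cases j <;>
      simp [Matrix.mul_apply, Fin.sum_univ_two, Matrix.one_apply, hu1, hu2, hv1, hv2]

lemma aux_conj_sq {lam : ℂ} {s : ℂ} {γr : ℝ}
    (hγ2 : (γr:ℂ) * (γr:ℂ) = (‖lam‖ : ℂ) / s) :
    (lam / (‖lam‖ : ℂ) * γr) * (starRingEnd ℂ) (lam / (‖lam‖ : ℂ) * γr)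
      = (‖lam‖ : ℂ) / s := by
  rcases eq_or_ne lam 0 with h0 | h0
  · simp [h0]
  have habs : (‖lam‖ : ℂ) ≠ 0 := Complex.ofReal_ne_zero.mpr (norm_ne_zero_iff.mpr h0)
  have hmc : lam * (starRingEnd ℂ) lam = (‖lam‖ : ℂ) * (‖lam‖ : ℂ) := by
    rw [Complex.mul_conj, Complex.normSq_eq_norm_sq]
    push_cast
    ring
  have key : (lam / (‖lam‖ : ℂ) * γr) * (starRingEnd ℂ) (lam / (‖lam‖ : ℂ) * γr)
      = (lam * (starRingEnd ℂ) lam) / ((‖lam‖ : ℂ) * (‖lam‖ : ℂ)) * ((γr:ℂ)*(γr:ℂ)) := by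
    simp only [map_mul, map_div₀, Complex.conj_ofReal]
    ring
  rw [key, hmc, hγ2, div_self (mul_ne_zero habs habs), one_mul]

lemma aux_mul_self {lam : ℂ} {s : ℂ} {γr : ℝ}
    (hγ2 : (γr:ℂ) * (γr:ℂ) = (‖lam‖ : ℂ) / s) :
    (lam / (‖lam‖ : ℂ) * γr) * γr = lam / s := by
  rcases eq_or_ne lam 0 with h0 | h0
  · simp [h0]
  have habs : (‖lam‖ : ℂ) ≠ 0 := Complex.ofReal_ne_zero.mpr (norm_ne_zero_iff.mpr h0)
  rw [mul_assoc, hγ2]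
  field_simp

theorem stmt_14 {A B : Type*} [CStarAlgebra A] [CStarAlgebra B] (φ : A → B)
    (hhom : ∀ (c : ℂ) (x : A), φ (c • x) = c • φ x)
    (hmap : ∀ u : Matrix (Fin 2) (Fin 2) A,
      u ∈ unitary (Matrix (Fin 2) (Fin 2) A) →
      u.map φ ∈ unitary (Matrix (Fin 2) (Fin 2) B))
    (hmul : ∀ u v : Matrix (Fin 2) (Fin 2) A,
      u ∈ unitary (Matrix (Fin 2) (Fin 2) A) →
      v ∈ unitary (Matrix (Fin 2) (Fin 2) A) →
      (u * v).map φ = u.map φ * v.map φ) :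
    ∀ a b : A,
      (∃ (lam : ℂ) (u : A), u ∈ unitary A ∧ a = lam • u) →
      (∃ (mu : ℂ) (v : A), v ∈ unitary A ∧ b = mu • v) →
      φ (a + b) = φ a + φ b := by
  have hφ0 : φ 0 = 0 := by simpa using hhom 0 0
  have hφ1 : φ 1 = 1 := by
    have hM1 : (1 : Matrix (Fin 2) (Fin 2) A).map φ ∈ unitary _ := hmap 1 (one_mem _)
    have hMsq : (1 : Matrix (Fin 2) (Fin 2) A).map φ
        = (1 : Matrix (Fin 2) (Fin 2) A).map φ * (1 : Matrix (Fin 2) (Fin 2) A).map φ := by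
      have := hmul 1 1 (one_mem _) (one_mem _); rwa [one_mul] at this
    have hMeq : (1 : Matrix (Fin 2) (Fin 2) A).map φ = 1 := by
      have h2 := congrArg (fun X => star ((1 : Matrix (Fin 2) (Fin 2) A).map φ) * X) hMsq
      simp only [← mul_assoc, hM1.1, one_mul] at h2
      exact h2.symm
    have := (Matrix.ext_iff.mpr hMeq) 0 0
    simpa [Matrix.map_apply, Matrix.one_apply] using this
  have hφs : ∀ c : ℂ, φ (c • 1) = c • (1 : B) := fun c => by rw [hhom, hφ1]
  rintro a b ⟨lam, u, hu, ha⟩ ⟨mu, v, hv, hb⟩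
  set s0 : ℝ := ‖lam‖ + ‖mu‖ with hs0
  by_cases hs : s0 = 0
  · have h1 := norm_nonneg lam
    have h2 := norm_nonneg mu
    have hlam : lam = 0 := norm_eq_zero.mp (by rw [hs0] at hs; linarith)
    have hmu : mu = 0 := norm_eq_zero.mp (by rw [hs0] at hs; linarith)
    simp [ha, hb, hlam, hmu, hφ0]
  · set s : ℂ := (s0 : ℂ) with hsdef
    have hsne : s ≠ 0 := Complex.ofReal_ne_zero.mpr hs
    have hs0nonneg : 0 ≤ s0 := by positivity
    set γr : ℝ := Real.sqrt (‖lam‖ / s0) with hγr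
    set δr : ℝ := Real.sqrt (‖mu‖ / s0) with hδr
    have hγ2 : (γr : ℂ) * (γr : ℂ) = (‖lam‖ : ℂ) / s := by
      rw [← Complex.ofReal_mul, hγr, Real.mul_self_sqrt (by positivity)]
      push_cast [hsdef]
      ring
    have hδ2 : (δr : ℂ) * (δr : ℂ) = (‖mu‖ : ℂ) / s := by
      rw [← Complex.ofReal_mul, hδr, Real.mul_self_sqrt (by positivity)]
      push_cast [hsdef]
      ring
    set α : ℂ := lam / (‖lam‖ : ℂ) * γr with hα
    set β : ℂ := mu / (‖mu‖ : ℂ) * δr with hβ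
    have hαγ : α * γr = lam / s := aux_mul_self hγ2
    have hβδ : β * δr = mu / s := aux_mul_self hδ2
    have hαα : α * (starRingEnd ℂ) α = (‖lam‖ : ℂ) / s := aux_conj_sq hγ2
    have hββ : β * (starRingEnd ℂ) β = (‖mu‖ : ℂ) / s := aux_conj_sq hδ2
    have hsum1 : α * (starRingEnd ℂ) α + β * (starRingEnd ℂ) β = 1 := by
      rw [hαα, hββ, ← add_div, ← Complex.ofReal_add, ← hs0, ← hsdef, div_self hsne]
    have hsum2 : (γr:ℂ) * (starRingEnd ℂ) (γr:ℂ) + (-(δr:ℂ)) * (starRingEnd ℂ) (-(δr:ℂ)) = 1 := by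
      simp only [map_neg, Complex.conj_ofReal, neg_mul_neg]
      rw [hγ2, hδ2, ← add_div, ← Complex.ofReal_add, ← hs0, ← hsdef, div_self hsne]
    -- the matrices
    set H1 : Matrix (Fin 2) (Fin 2) A :=
      !![α • 1, β • 1; -(((starRingEnd ℂ) β) • 1), ((starRingEnd ℂ) α) • 1] with hH1def
    set H2 : Matrix (Fin 2) (Fin 2) A :=
      !![(γr:ℂ) • 1, (-(δr:ℂ)) • 1;
         -(((starRingEnd ℂ) (-(δr:ℂ))) • 1), ((starRingEnd ℂ) (γr:ℂ)) • 1] with hH2def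
    set P : Matrix (Fin 2) (Fin 2) A := !![u, 0; 0, v] with hPdef
    have hH1 : H1 ∈ unitary _ := aux_u2 α β hsum1
    have hH2 : H2 ∈ unitary _ := aux_u2 (γr:ℂ) (-(δr:ℂ)) hsum2
    have hP : P ∈ unitary _ := aux_diag u v hu hv
    have key : ((H1 * P) * H2).map φ = H1.map φ * P.map φ * H2.map φ := by
      rw [hmul _ _ (mul_mem hH1 hP) hH2, hmul _ _ hH1 hP]
    have hE := (Matrix.ext_iff.mpr key) 0 0
    -- compute left entry
    have hrs : ∀ (r : ℝ) (c : ℂ) (x : A), r • c • x = (c * r) • x := fun r c x => by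
      rw [smul_comm, ← Complex.coe_smul, smul_smul]
    have hLentry : ((H1 * P) * H2) 0 0 = (lam / s) • u + (mu / s) • v := by
      simp [hH1def, hH2def, hPdef, Matrix.mul_apply, Fin.sum_univ_two,
        smul_mul_assoc, mul_smul_comm, smul_smul, Complex.conj_ofReal]
      rw [hrs, hrs, hαγ, hβδ]
    have hrsB : ∀ (r : ℝ) (c : ℂ) (x : B), r • c • x = (c * r) • x := fun r c x => by
      rw [smul_comm, ← Complex.coe_smul, smul_smul]
    have hφsr : ∀ r : ℝ, φ (r • 1) = r • (1 : B) := fun r => by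
      rw [← Complex.coe_smul, hφs, Complex.coe_smul]
    have hRentry : (H1.map φ * P.map φ * H2.map φ) 0 0 = (lam / s) • φ u + (mu / s) • φ v := by
      simp [hH1def, hH2def, hPdef, Matrix.mul_apply, Matrix.map_apply, Fin.sum_univ_two,
        hφ0, hφs, hφsr, smul_mul_assoc, mul_smul_comm, smul_smul, Complex.conj_ofReal]
      rw [hrsB, hrsB, hαγ, hβδ]
    have main : φ ((lam / s) • u + (mu / s) • v) = (lam / s) • φ u + (mu / s) • φ v := by
      have h := hE
      rw [Matrix.map_apply, hLentry, hRentry] at h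
      exact h
    have hsum : (lam / s) • u + (mu / s) • v = s⁻¹ • (a + b) := by
      rw [ha, hb, smul_add, smul_smul, smul_smul, div_eq_inv_mul, div_eq_inv_mul]
    rw [hsum, hhom] at main
    have e1 : s * (lam / s) = lam := by field_simp
    have e2 : s * (mu / s) = mu := by field_simp
    calc φ (a + b) = s • s⁻¹ • φ (a + b) := by rw [smul_smul, mul_inv_cancel₀ hsne, one_smul]
      _ = s • ((lam / s) • φ u + (mu / s) • φ v) := by rw [main]
      _ = lam • φ u + mu • φ v := by rw [smul_add, smul_smul, smul_smul, e1, e2]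
      _ = φ a + φ b := by rw [ha, hb, hhom, hhom]
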